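/- With u_n(v) = a_n v + b_n where a_n = 1/√(2 ln n), b_n = √(2 ln n) − ln(4π ln n)/(2√(2 ln n)), and τ(n) = τ/ln n for fixed τ > 0, for every real v and z: (u_n(v) − √(τ(n))·z)·(1 − τ(n))^{−1/2} = u_n(v + τ − √(2τ)·z) + o(1); in fact for large n the identity holds exactly up to terms vanishing as n → ∞. -/

import Mathlib

open Real Filter

noncomputable def aseq (n : ℕ) : ℝ := 1 / Real.sqrt (2 * Real.log n)

noncomputable def bseq (n : ℕ) : ℝ :=
  Real.sqrt (2 * Real.log n) -
    Real.log (4 * Real.pi * Real.log n) / (2 * Real.sqrt (2 * Real.log n))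

noncomputable def useq (n : ℕ) (s : ℝ) : ℝ := aseq n * s + bseq n

lemma sqrt_tendsto_atTop : Tendsto Real.sqrt atTop atTop := by
  refine tendsto_atTop_mono' atTop ?_ (tendsto_rpow_atTop (by norm_num : (0:ℝ) < 1/2))
  filter_upwards [eventually_ge_atTop (0:ℝ)] with x hx
  rw [Real.sqrt_eq_rpow]

lemma log_div_sqrt_tendsto : Tendsto (fun x : ℝ => Real.log x / Real.sqrt x) atTop (nhds 0) := by
  have h := (isLittleO_log_rpow_atTop (by norm_num : (0:ℝ) < 1/2)).tendsto_div_nhds_zero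
  refine h.congr' ?_
  filter_upwards [eventually_ge_atTop (0:ℝ)] with x hx
  rw [Real.sqrt_eq_rpow]

lemma aux_id (s w c l v z τ q : ℝ) (hs : s ≠ 0) (hw : w ≠ 0) (hq : q ≠ 0) :
    (1 / (q * s) * v + (q * s - l / (2 * (q * s))) - c * (1 / (q * s)) * z) / w -
      (1 / (q * s) * (v + τ - c * z) + (q * s - l / (2 * (q * s)))) =
    q * s * (1 / w - 1) +
      (-(l / (2 * (q * s))) + (v - c * z) * (1 / (q * s))) * (1 / w - 1) -
      τ * (1 / (q * s)) := by
  field_simp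
  ring

lemma aux2 (s w τ q : ℝ) (hs : s ≠ 0) (hw : w ≠ 0) (h1w : 1 + w ≠ 0) :
    q * s * (τ / (s ^ 2 * (w * (1 + w)))) = q * τ / (s * (w * (1 + w))) := by
  field_simp

lemma key (τ : ℝ) (hτ : 0 < τ) (v z : ℝ) :
    Tendsto (fun x : ℝ =>
      (1 / Real.sqrt (2 * x) * v +
          (Real.sqrt (2 * x) - Real.log (4 * Real.pi * x) / (2 * Real.sqrt (2 * x))) -
          Real.sqrt (τ / x) * z) / Real.sqrt (1 - τ / x) -
        (1 / Real.sqrt (2 * x) * (v + τ - Real.sqrt (2 * τ) * z) +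
          (Real.sqrt (2 * x) - Real.log (4 * Real.pi * x) / (2 * Real.sqrt (2 * x)))))
      atTop (nhds 0) := by
  have hsx : Tendsto (fun x : ℝ => Real.sqrt x) atTop atTop := sqrt_tendsto_atTop
  have ht : Tendsto (fun x : ℝ => τ / x) atTop (nhds 0) :=
    tendsto_const_nhds.div_atTop tendsto_id
  have hw : Tendsto (fun x : ℝ => Real.sqrt (1 - τ / x)) atTop (nhds 1) := by
    have h1 : Tendsto (fun x : ℝ => 1 - τ / x) atTop (nhds 1) := by
      simpa using tendsto_const_nhds.sub ht
    have := (Real.continuous_sqrt.tendsto 1).comp h1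
    simpa [Function.comp_def] using this
  have hD : Tendsto (fun x : ℝ => Real.sqrt x *
      (Real.sqrt (1 - τ / x) * (1 + Real.sqrt (1 - τ / x)))) atTop atTop := by
    refine Filter.Tendsto.atTop_mul_pos (C := 1 * (1 + 1)) (by norm_num) hsx ?_
    exact hw.mul (tendsto_const_nhds.add hw)
  have hA1 : Tendsto (fun x : ℝ => 1 / Real.sqrt (1 - τ / x) - 1) atTop (nhds 0) := by
    have h1 : Tendsto (fun x : ℝ => 1 / Real.sqrt (1 - τ / x)) atTop (nhds 1) := by
      simpa using hw.inv₀ one_ne_zero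
    have h2 : Tendsto (fun x : ℝ => 1 / Real.sqrt (1 - τ / x) - 1) atTop (nhds (1 - 1)) :=
      h1.sub tendsto_const_nhds
    simpa using h2
  have h2x : Tendsto (fun x : ℝ => Real.sqrt (2 * x)) atTop atTop :=
    hsx.comp (tendsto_id.const_mul_atTop (by norm_num : (0:ℝ) < 2))
  have hinv2x : Tendsto (fun x : ℝ => 1 / Real.sqrt (2 * x)) atTop (nhds 0) := by
    have h : Tendsto (fun x : ℝ => (Real.sqrt (2 * x))⁻¹) atTop (nhds 0) := h2x.inv_tendsto_atTop
    simpa only [one_div] using h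
  have hlogterm : Tendsto (fun x : ℝ =>
      Real.log (4 * Real.pi * x) / (2 * Real.sqrt (2 * x))) atTop (nhds 0) := by
    have h1 : Tendsto (fun x : ℝ => Real.log (4 * Real.pi) * (1 / Real.sqrt (2 * x)) / 2 +
        Real.log x / Real.sqrt x * (1 / (2 * Real.sqrt 2))) atTop (nhds 0) := by
      have a1 := ((tendsto_const_nhds (x := Real.log (4 * Real.pi))
        (f := (atTop : Filter ℝ))).mul hinv2x).div_const 2
      have a2 := log_div_sqrt_tendsto.mul (tendsto_const_nhds
        (x := 1 / (2 * Real.sqrt 2)) (f := (atTop : Filter ℝ)))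
      simpa using a1.add a2
    refine h1.congr' ?_
    filter_upwards [eventually_gt_atTop (0:ℝ)] with x hx
    have hx4 : (0:ℝ) < 4 * Real.pi := by positivity
    have hsqx : Real.sqrt x ≠ 0 := by positivity
    have h2 : Real.sqrt 2 ≠ 0 := by positivity
    rw [Real.log_mul (ne_of_gt hx4) (ne_of_gt hx), Real.sqrt_mul (by norm_num : (0:ℝ) ≤ 2)]
    field_simp
  -- the simplified form tends to 0
  have hg : Tendsto (fun x : ℝ =>
      Real.sqrt 2 * τ / (Real.sqrt x * (Real.sqrt (1 - τ / x) * (1 + Real.sqrt (1 - τ / x)))) +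
        (-(Real.log (4 * Real.pi * x) / (2 * Real.sqrt (2 * x))) +
          (v - Real.sqrt (2 * τ) * z) * (1 / Real.sqrt (2 * x))) *
          (1 / Real.sqrt (1 - τ / x) - 1) -
        τ * (1 / Real.sqrt (2 * x))) atTop (nhds 0) := by
    have h1 : Tendsto (fun x : ℝ => Real.sqrt 2 * τ /
        (Real.sqrt x * (Real.sqrt (1 - τ / x) * (1 + Real.sqrt (1 - τ / x)))))
        atTop (nhds 0) := tendsto_const_nhds.div_atTop hD
    have h2 := (((hlogterm.neg).add ((tendsto_const_nhds
      (x := v - Real.sqrt (2 * τ) * z) (f := (atTop : Filter ℝ))).mul hinv2x)).mul hA1)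
    have h3 := (tendsto_const_nhds (x := τ) (f := (atTop : Filter ℝ))).mul hinv2x
    have := (h1.add h2).sub h3
    simpa using this
  refine hg.congr' ?_
  filter_upwards [eventually_gt_atTop (max τ 1)] with x hx
  have hx1 : (1:ℝ) < x := lt_of_le_of_lt (le_max_right _ _) hx
  have hx0 : (0:ℝ) < x := lt_trans one_pos hx1
  have hτx : τ / x < 1 := (div_lt_one hx0).2 (lt_of_le_of_lt (le_max_left _ _) hx)
  have hτx0 : 0 < τ / x := div_pos hτ hx0
  set sx := Real.sqrt x with hsxdef
  set w := Real.sqrt (1 - τ / x) with hwdef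
  have hsx0 : 0 < sx := Real.sqrt_pos.2 hx0
  have hw0 : 0 < w := Real.sqrt_pos.2 (by linarith)
  have h1w : (0:ℝ) < 1 + w := by linarith
  have hsx2 : sx ^ 2 = x := Real.sq_sqrt hx0.le
  have hw2 : w ^ 2 = 1 - τ / x := Real.sq_sqrt (by linarith)
  have hs2x : Real.sqrt (2 * x) = Real.sqrt 2 * sx := Real.sqrt_mul (by norm_num) x
  have h2pos : (0:ℝ) < Real.sqrt 2 := by positivity
  have hq : Real.sqrt (τ / x) = Real.sqrt (2 * τ) * (1 / (Real.sqrt 2 * sx)) := by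
    rw [Real.sqrt_div hτ.le x, Real.sqrt_mul (by norm_num : (0:ℝ) ≤ 2) τ, ← hsxdef]
    field_simp
  -- step: 1/w - 1 = τ / (x * (w*(1+w)))
  have hww : (1 - w) * (1 + w) = τ / x := by nlinarith [hw2]
  have hstep : 1 / w - 1 = τ / (x * (w * (1 + w))) := by
    calc 1 / w - 1 = (1 - w) / w := by field_simp
    _ = (1 - w) * (1 + w) / (w * (1 + w)) := (mul_div_mul_right _ w h1w.ne').symm
    _ = (τ / x) / (w * (1 + w)) := by rw [hww]
    _ = τ / (x * (w * (1 + w))) := by rw [div_div]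
  rw [hs2x, hq]
  rw [aux_id sx w (Real.sqrt (2 * τ)) (Real.log (4 * Real.pi * x)) v z τ (Real.sqrt 2)
      hsx0.ne' hw0.ne' h2pos.ne', hstep, ← hsx2,
    aux2 sx w τ (Real.sqrt 2) hsx0.ne' hw0.ne' h1w.ne']

theorem stmt_11 (τ : ℝ) (hτ : 0 < τ) (v z : ℝ) :
    Tendsto (fun n : ℕ =>
        (useq n v - Real.sqrt (τ / Real.log n) * z) / Real.sqrt (1 - τ / Real.log n) -
          useq n (v + τ - Real.sqrt (2 * τ) * z))
      atTop (nhds 0) := by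
  have hlog : Tendsto (fun n : ℕ => Real.log n) atTop atTop :=
    Real.tendsto_log_atTop.comp tendsto_natCast_atTop_atTop
  exact (key τ hτ v z).comp hlog
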